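/- Let m ≥ 2 be an integer and r, s integers with 1 ≤ r ≤ m−1, 1 ≤ s ≤ m+1 and r ≡ s (mod 2). Then ((m+2)r − ms)² ≤ (m² − 2)², and consequently h^m_{r,s} ≤ m(m−2)/8. -/
import Mathlib


/-- `h^m_{r,s} = (((m+2)r − ms)² − 4) / (8m(m+2))`. -/
noncomputable def hPQ (m : ℝ) (r s : ℤ) : ℝ :=
  (((m + 2) * (r : ℝ) - m * (s : ℝ)) ^ 2 - 4) / (8 * m * (m + 2))

/-- For `m ≥ 2`, `1 ≤ r ≤ m−1`, `1 ≤ s ≤ m+1`, `r ≡ s (mod 2)`: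
`((m+2)r − ms)² ≤ (m² − 2)²`, hence `h^m_{r,s} ≤ m(m−2)/8`. -/
theorem h_le_bound (m : ℤ) (hm : 2 ≤ m) (r s : ℤ)
    (hr1 : 1 ≤ r) (hr2 : r ≤ m - 1) (hs1 : 1 ≤ s) (hs2 : s ≤ m + 1)
    (hpar : r % 2 = s % 2) :
    ((m + 2) * r - m * s) ^ 2 ≤ (m ^ 2 - 2) ^ 2 ∧
    hPQ (m : ℝ) r s ≤ (m : ℝ) * ((m : ℝ) - 2) / 8 := by
  have hx1 : (m + 2) * r - m * s ≤ m ^ 2 - 2 := by nlinarith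
  have hx2 : -(m ^ 2 - 2) ≤ (m + 2) * r - m * s := by nlinarith
  have h1 : ((m + 2) * r - m * s) ^ 2 ≤ (m ^ 2 - 2) ^ 2 := sq_le_sq' hx2 hx1
  refine ⟨h1, ?_⟩
  have hm' : (2 : ℝ) ≤ (m : ℝ) := by exact_mod_cast hm
  have hden : 0 < 8 * (m : ℝ) * ((m : ℝ) + 2) := by nlinarith
  have h1' : (((m : ℝ) + 2) * (r : ℝ) - (m : ℝ) * (s : ℝ)) ^ 2 ≤ ((m : ℝ) ^ 2 - 2) ^ 2 := by
    exact_mod_cast h1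
  unfold hPQ
  rw [div_le_div_iff₀ hden (by norm_num : (0:ℝ) < 8)]
  nlinarith [h1']
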